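/- Let α ≥ 0, σ > α + 1, and suppose (c_d)_{d≥2} are nonnegative reals with c_d ≤ K · d^{1/2−σ} · log d for all d ≥ 2. Let (f̂_m)_{m≥1} satisfy Σ_{m≥1} m^{2α}|f̂_m|² ≤ M² < ∞. Then for every k ≥ 1, ( Σ_{d | k, d > 1} c_d · |f̂_{k/d}| )² ≤ M² · K² · k^{−2α} · ζ''(2(σ−α)−1), where ζ'' denotes the second derivative of the Riemann zeta function. -/
import Mathlib

open LSeries Finset

lemma zeta2_hasSum {s : ℝ} (hs : 1 < s) :
    HasSum (fun n : ℕ => (Real.log n) ^ 2 / (n : ℝ) ^ s)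
      ((iteratedDeriv 2 riemannZeta ((s : ℝ) : ℂ)).re) := by
  have habs : abscissaOfAbsConv 1 < ((s : ℂ)).re := by
    rw [abscissaOfAbsConv_one, Complex.ofReal_re]
    exact_mod_cast hs
  have heq : iteratedDeriv 2 riemannZeta (s : ℂ) = LSeries (logMul^[2] 1) (s : ℂ) := by
    have h1 : riemannZeta =ᶠ[nhds (s : ℂ)] LSeries 1 := by
      filter_upwards [(isOpen_lt continuous_const Complex.continuous_re).mem_nhds
        (by simpa using hs : 1 < (s : ℂ).re)] with z hz
      exact (LSeries_one_eq_riemannZeta hz).symm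
    rw [h1.iteratedDeriv_eq 2, LSeries_iteratedDeriv 2 habs]
    norm_num
  have hsum : LSeriesSummable (logMul^[2] 1) (s : ℂ) := by
    refine LSeriesSummable_of_abscissaOfAbsConv_lt_re ?_
    rwa [absicssaOfAbsConv_logPowMul]
  have hterm : ∀ n : ℕ, LSeries.term (logMul^[2] 1) (s : ℂ) n
      = (((Real.log n) ^ 2 / (n : ℝ) ^ s : ℝ) : ℂ) := by
    intro n
    rcases eq_or_ne n 0 with rfl | hn
    · simp [LSeries.term]
    · rw [LSeries.term_of_ne_zero hn]
      have h2 : logMul^[2] (1 : ℕ → ℂ) n = ((Real.log n : ℝ) : ℂ) ^ 2 := by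
        show logMul (logMul 1) n = _
        simp [logMul, ← Complex.natCast_log]
        ring
      rw [h2, ← Complex.ofReal_natCast n, ← Complex.ofReal_cpow (Nat.cast_nonneg n) s]
      push_cast
      ring
  have hHS : HasSum (LSeries.term (logMul^[2] 1) (s : ℂ)) (LSeries (logMul^[2] 1) (s : ℂ)) :=
    hsum.hasSum
  have := Complex.reCLM.hasSum hHS
  rw [← heq] at this
  simpa only [hterm, Complex.reCLM_apply, Complex.ofReal_re] using this

theorem broadband_divisor_sum_estimate (α σ K M : ℝ) (hα : 0 ≤ α) (hσ : α + 1 < σ)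
    (c : ℕ → ℝ) (hc0 : ∀ d : ℕ, 2 ≤ d → 0 ≤ c d)
    (hc : ∀ d : ℕ, 2 ≤ d → c d ≤ K * (d : ℝ) ^ ((1:ℝ)/2 - σ) * Real.log d)
    (f : ℕ → ℂ)
    (hfs : Summable fun m : ℕ => ((m + 1 : ℕ) : ℝ) ^ (2 * α) * ‖f (m + 1)‖ ^ 2)
    (hfM : (∑' m : ℕ, ((m + 1 : ℕ) : ℝ) ^ (2 * α) * ‖f (m + 1)‖ ^ 2) ≤ M ^ 2) :
    ∀ k : ℕ, 1 ≤ k →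
      (∑ d ∈ k.divisors.filter (fun d => 1 < d), c d * ‖f (k / d)‖) ^ 2 ≤
        M ^ 2 * K ^ 2 * (k : ℝ) ^ (-(2 * α)) *
          (iteratedDeriv 2 riemannZeta ((2 * (σ - α) - 1 : ℝ) : ℂ)).re := by
  intro k hk
  set s : ℝ := 2 * (σ - α) - 1 with hs_def
  have hs1 : 1 < s := by simp only [hs_def]; linarith
  have hZ := zeta2_hasSum hs1
  set Z : ℝ := (iteratedDeriv 2 riemannZeta ((s : ℝ) : ℂ)).re with hZ_def
  have hZ0 : 0 ≤ Z := hZ.nonneg fun n => by positivity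
  have hk0 : (0:ℝ) < (k:ℝ) := by exact_mod_cast hk
  set A := k.divisors.filter (fun d => 1 < d) with hA
  -- facts about elements of A
  have hmem : ∀ d ∈ A, 2 ≤ d ∧ d ∣ k ∧ 1 ≤ k / d := by
    intro d hd
    rw [hA, Finset.mem_filter, Nat.mem_divisors] at hd
    obtain ⟨⟨hdvd, hkne⟩, hd1⟩ := hd
    refine ⟨hd1, hdvd, ?_⟩
    rw [Nat.one_le_div_iff (by omega)]
    exact Nat.le_of_dvd (by omega) hdvd
  set u : ℕ → ℝ := fun d => K * (d : ℝ) ^ ((1:ℝ)/2 - σ) * Real.log d * ((k / d : ℕ) : ℝ) ^ (-α)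
    with hu
  set v : ℕ → ℝ := fun d => ((k / d : ℕ) : ℝ) ^ α * ‖f (k / d)‖ with hv
  have hstep1 : ∀ d ∈ A, c d * ‖f (k / d)‖ ≤ u d * v d := by
    intro d hd
    obtain ⟨hd2, hdvd, hkd⟩ := hmem d hd
    have hkd0 : (0:ℝ) < ((k / d : ℕ) : ℝ) := by exact_mod_cast hkd
    have : u d * v d = (K * (d : ℝ) ^ ((1:ℝ)/2 - σ) * Real.log d) * ‖f (k / d)‖ := by
      rw [hu, hv]
      have : ((k / d : ℕ) : ℝ) ^ (-α) * ((k / d : ℕ) : ℝ) ^ α = 1 := by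
        rw [← Real.rpow_add hkd0]; simp
      calc K * (d:ℝ) ^ ((1:ℝ)/2 - σ) * Real.log d * ((k / d : ℕ) : ℝ) ^ (-α) *
            (((k / d : ℕ) : ℝ) ^ α * ‖f (k / d)‖)
          = K * (d:ℝ) ^ ((1:ℝ)/2 - σ) * Real.log d *
            (((k / d : ℕ) : ℝ) ^ (-α) * ((k / d : ℕ) : ℝ) ^ α) * ‖f (k / d)‖ := by ring
        _ = _ := by rw [this]; ring
    rw [this]
    exact mul_le_mul_of_nonneg_right (hc d hd2) (norm_nonneg _)
  have hS0 : 0 ≤ ∑ d ∈ A, c d * ‖f (k / d)‖ :=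
    Finset.sum_nonneg fun d hd => mul_nonneg (hc0 d (hmem d hd).1) (norm_nonneg _)
  have hle1 : ∑ d ∈ A, c d * ‖f (k / d)‖ ≤ ∑ d ∈ A, u d * v d :=
    Finset.sum_le_sum hstep1
  have hCS : (∑ d ∈ A, u d * v d) ^ 2 ≤ (∑ d ∈ A, u d ^ 2) * ∑ d ∈ A, v d ^ 2 :=
    Finset.sum_mul_sq_le_sq_mul_sq A u v
  -- bound on ∑ u²
  have hu2 : ∀ d ∈ A, u d ^ 2 = K ^ 2 * (k : ℝ) ^ (-(2 * α)) *
      ((Real.log d) ^ 2 / (d : ℝ) ^ s) := by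
    intro d hd
    obtain ⟨hd2, hdvd, hkd⟩ := hmem d hd
    have hd0 : (0:ℝ) < (d:ℝ) := by positivity
    have hcast : ((k / d : ℕ) : ℝ) = (k : ℝ) / (d : ℝ) := by
      rw [Nat.cast_div hdvd (by positivity)]
    have hdiv : ((k / d : ℕ) : ℝ) ^ (-α) = (k:ℝ) ^ (-α) * (d:ℝ) ^ α := by
      rw [hcast, Real.div_rpow hk0.le hd0.le, Real.rpow_neg hk0.le, Real.rpow_neg hd0.le,
        div_eq_mul_inv, inv_inv]
    have hsq : ∀ (x : ℝ) (a : ℝ), 0 < x → (x ^ a) ^ 2 = x ^ (2 * a) := by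
      intro x a hx
      rw [sq, ← Real.rpow_add hx]; ring_nf
    rw [hu]
    simp only
    rw [mul_pow, mul_pow, mul_pow, hdiv, mul_pow,
      hsq _ _ hd0, hsq _ _ hk0, hsq _ _ hd0]
    rw [show (k:ℝ) ^ (2 * (-α)) = (k:ℝ) ^ (-(2*α)) by ring_nf]
    have hds : (d:ℝ) ^ (2 * ((1:ℝ)/2 - σ)) * (d:ℝ) ^ (2*α) = ((d:ℝ) ^ s)⁻¹ := by
      rw [← Real.rpow_add hd0, show 2 * ((1:ℝ)/2 - σ) + 2*α = -s by rw [hs_def]; ring,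
        Real.rpow_neg hd0.le]
    rw [div_eq_mul_inv (Real.log (d:ℝ) ^ 2) ((d:ℝ) ^ s), ← hds]
    ring
  have hsum_u : ∑ d ∈ A, u d ^ 2 ≤ K ^ 2 * (k : ℝ) ^ (-(2 * α)) * Z := by
    rw [Finset.sum_congr rfl hu2, ← Finset.mul_sum]
    have h1 : ∑ d ∈ A, (Real.log d) ^ 2 / (d : ℝ) ^ s ≤ Z := by
      rw [← hZ.tsum_eq]
      exact Summable.sum_le_tsum A (fun n _ => by positivity) hZ.summable
    exact mul_le_mul_of_nonneg_left h1 (by positivity)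
  -- bound on ∑ v²
  have hsum_v : ∑ d ∈ A, v d ^ 2 ≤ M ^ 2 := by
    set F : ℕ → ℝ := fun m : ℕ => ((m + 1 : ℕ) : ℝ) ^ (2 * α) * ‖f (m + 1)‖ ^ 2 with hF
    have hv2 : ∀ d ∈ A, v d ^ 2 = F (k / d - 1) := by
      intro d hd
      obtain ⟨hd2, hdvd, hkd⟩ := hmem d hd
      have hkd0 : (0:ℝ) < ((k / d : ℕ) : ℝ) := by exact_mod_cast hkd
      have hmm : k / d - 1 + 1 = k / d := by omega
      simp only [hv, hF, hmm]
      rw [mul_pow, sq (((k / d : ℕ):ℝ) ^ α), ← Real.rpow_add hkd0]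
      ring_nf
    have hinj : Set.InjOn (fun d => k / d - 1) A := by
      intro d1 h1 d2 h2 he
      obtain ⟨_, hdvd1, hkd1⟩ := hmem d1 h1
      obtain ⟨_, hdvd2, hkd2⟩ := hmem d2 h2
      simp only at he
      have : k / d1 = k / d2 := by omega
      have e1 : k / (k / d1) = d1 := Nat.div_div_self hdvd1 (by omega)
      have e2 : k / (k / d2) = d2 := Nat.div_div_self hdvd2 (by omega)
      rw [← e1, this, e2]
    calc ∑ d ∈ A, v d ^ 2 = ∑ d ∈ A, F (k / d - 1) := Finset.sum_congr rfl hv2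
      _ = ∑ m ∈ A.image (fun d => k / d - 1), F m :=
          (Finset.sum_image (fun x hx y hy h => hinj hx hy h)).symm
      _ ≤ ∑' m : ℕ, F m := Summable.sum_le_tsum _ (fun n _ => by positivity) hfs
      _ ≤ M ^ 2 := hfM
  -- combine
  have hv0 : 0 ≤ ∑ d ∈ A, v d ^ 2 := Finset.sum_nonneg fun d _ => sq_nonneg _
  calc (∑ d ∈ A, c d * ‖f (k / d)‖) ^ 2
      ≤ (∑ d ∈ A, u d * v d) ^ 2 := pow_le_pow_left₀ hS0 hle1 2
    _ ≤ (∑ d ∈ A, u d ^ 2) * ∑ d ∈ A, v d ^ 2 := hCS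
    _ ≤ (K ^ 2 * (k : ℝ) ^ (-(2 * α)) * Z) * M ^ 2 :=
        mul_le_mul hsum_u hsum_v hv0 (by positivity)
    _ = M ^ 2 * K ^ 2 * (k : ℝ) ^ (-(2 * α)) * Z := by ring
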